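/- Suppose the partition $\{I_1, \dots, I_S\}$ of $\{1, \dots, n\}$ has equal block sizes $n/S$, and let $f: \mathbb{R} \to \mathbb{R}$ be bounded with $y_1, \dots, y_n$ i.i.d. Then $\mathrm{Var}\Big[\sum_{s=1}^S \big(\sum_{i,l \in I_s, i \ne l} f(y_i) f(y_l)\big)\Big] = S\big[4 m(m-1)\, \mathrm{Var}\{f(y_1)f(y_2)\} + 8 m(m-1)(m-2)\, \mathrm{Cov}\{f(y_1)f(y_2), f(y_1)f(y_3)\}\big]$ up to lower-order terms, where $m = n/S$; consequently $\frac{1}{n^2}\mathrm{Var}\big[\sum_{s=1}^S \sum_{i,l \in I_s, i \ne l} f(y_i)f(y_l)\big] = O(S^{-1}) + O(n/S^2)$, which converges to 0 whenever $S \to \infty$ and $S/\sqrt{n} \to \infty$. -/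

import Mathlib

open MeasureTheory Filter Finset ProbabilityTheory

lemma my_sum_offDiag {M : Type*} [AddCommMonoid M] (t : Finset ℕ) (h : ℕ → ℕ → M) :
    ∑ i ∈ t, ∑ l ∈ t.erase i, h i l = ∑ p ∈ t.offDiag, h p.1 p.2 := by
  exact (Finset.sum_finset_product' t.offDiag t (fun i => t.erase i) (fun p => by
    rw [Finset.mem_offDiag, Finset.mem_erase, ne_comm]; tauto)).symm

lemma my_var_bound {Ω : Type*} [MeasurableSpace Ω] (P : Measure Ω) [IsProbabilityMeasure P]
    (g : ℕ → Ω → ℝ) (hg : ∀ i, Measurable (g i))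
    (hindep : iIndepFun g P)
    (C : ℝ) (hC : 0 ≤ C) (hbdd : ∀ i ω, |g i ω| ≤ C)
    (Q : Finset (ℕ × ℕ)) (m : ℕ)
    (hshare : ∀ p ∈ Q,
      (Q.filter (fun q => q.1 = p.1 ∨ q.1 = p.2 ∨ q.2 = p.1 ∨ q.2 = p.2)).card ≤ 4 * m) :
    variance (fun ω => ∑ p ∈ Q, g p.1 ω * g p.2 ω) P
      ≤ (Q.card : ℝ) * ((4 * m) * (4 * C ^ 4)) := by
  classical
  set W : ℕ × ℕ → Ω → ℝ := fun p => g p.1 * g p.2 with hW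
  have measW : ∀ p, Measurable (W p) := fun p => (hg p.1).mul (hg p.2)
  have bW : ∀ p ω, |W p ω| ≤ C ^ 2 := by
    intro p ω
    calc |W p ω| = |g p.1 ω| * |g p.2 ω| := abs_mul _ _
      _ ≤ C * C := mul_le_mul (hbdd p.1 ω) (hbdd p.2 ω) (abs_nonneg _) hC
      _ = C ^ 2 := (sq C).symm
  have intW : ∀ p, Integrable (W p) P := fun p =>
    (integrable_const (C ^ 2)).mono' (measW p).aestronglyMeasurable
      (ae_of_all _ fun ω => by simpa using bW p ω)
  set μp : ℕ × ℕ → ℝ := fun p => ∫ ω, W p ω ∂P with hμp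
  have bμ : ∀ p, |μp p| ≤ C ^ 2 := by
    intro p
    have hb := norm_integral_le_of_norm_le_const (μ := P) (f := fun ω => W p ω) (C := C ^ 2)
      (ae_of_all _ (fun ω => by rw [Real.norm_eq_abs]; exact bW p ω))
    calc |μp p| = ‖∫ ω, W p ω ∂P‖ := (Real.norm_eq_abs _).symm
      _ ≤ C ^ 2 * (P Set.univ).toReal := hb
      _ = C ^ 2 := by simp
  set Z : ℕ × ℕ → Ω → ℝ := fun p ω => W p ω - μp p with hZ
  have measZ : ∀ p, Measurable (Z p) := fun p => (measW p).sub measurable_const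
  have bZ : ∀ p ω, |Z p ω| ≤ 2 * C ^ 2 := by
    intro p ω
    calc |Z p ω| ≤ |W p ω| + |μp p| := abs_sub _ _
      _ ≤ C ^ 2 + C ^ 2 := add_le_add (bW p ω) (bμ p)
      _ = 2 * C ^ 2 := by ring
  have intZ : ∀ p, Integrable (Z p) P := fun p => (intW p).sub (integrable_const _)
  have EZ : ∀ p, ∫ ω, Z p ω ∂P = 0 := by
    intro p
    simp only [hZ]
    rw [integral_sub (intW p) (integrable_const _), integral_const]
    simp [hμp]
  have intZZ : ∀ p q, Integrable (fun ω => Z p ω * Z q ω) P := fun p q =>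
    (intZ q).bdd_mul (measZ p).aestronglyMeasurable
      (c := 2 * C ^ 2) (ae_of_all _ fun ω => by simpa using bZ p ω)
  have bZZ : ∀ p q ω, Z p ω * Z q ω ≤ 4 * C ^ 4 := by
    intro p q ω
    calc Z p ω * Z q ω ≤ |Z p ω * Z q ω| := le_abs_self _
      _ = |Z p ω| * |Z q ω| := abs_mul _ _
      _ ≤ (2 * C ^ 2) * (2 * C ^ 2) :=
          mul_le_mul (bZ p ω) (bZ q ω) (abs_nonneg _) (by positivity)
      _ = 4 * C ^ 4 := by ring
  set X : Ω → ℝ := fun ω => ∑ p ∈ Q, W p ω with hX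
  have measX : Measurable X := Finset.measurable_sum _ (fun p _ => measW p)
  have bX : ∀ ω, ‖X ω‖ ≤ (Q.card : ℝ) * C ^ 2 := by
    intro ω
    rw [Real.norm_eq_abs]
    calc |X ω| ≤ ∑ p ∈ Q, |W p ω| := Finset.abs_sum_le_sum_abs _ _
      _ ≤ ∑ p ∈ Q, C ^ 2 := Finset.sum_le_sum fun p _ => bW p ω
      _ = (Q.card : ℝ) * C ^ 2 := by rw [Finset.sum_const, nsmul_eq_mul]
  have memX : MemLp X 2 P := MemLp.of_bound measX.aestronglyMeasurable _ (ae_of_all _ bX)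
  have hEX : ∫ ω, X ω ∂P = ∑ p ∈ Q, μp p := integral_finset_sum _ fun p _ => intW p
  have hgoal : (fun ω => ∑ p ∈ Q, g p.1 ω * g p.2 ω) = X := rfl
  rw [hgoal, variance_eq_integral measX.aemeasurable]
  have key : (fun ω => (X ω - ∫ ω, X ω ∂P) ^ 2) = fun ω => ∑ p ∈ Q, ∑ q ∈ Q, Z p ω * Z q ω := by
    funext ω
    simp only [hEX]
    rw [← Finset.sum_sub_distrib, sq, Finset.sum_mul_sum]
  rw [key]
  rw [integral_finset_sum _ (fun p _ => integrable_finset_sum _ fun q _ => intZZ p q)]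
  have inner : ∀ p ∈ Q, ∑ q ∈ Q, ∫ ω, Z p ω * Z q ω ∂P ≤ (4 * m) * (4 * C ^ 4) := by
    intro p hp
    set Pr : ℕ × ℕ → Prop := fun q => q.1 = p.1 ∨ q.1 = p.2 ∨ q.2 = p.1 ∨ q.2 = p.2 with hPr
    have hsplit := (Finset.sum_filter_add_sum_filter_not Q Pr
      (fun q => ∫ ω, Z p ω * Z q ω ∂P))
    have hzero : ∑ q ∈ Q.filter (fun q => ¬ Pr q), ∫ ω, Z p ω * Z q ω ∂P = 0 := by
      apply Finset.sum_eq_zero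
      intro q hq
      obtain ⟨hq1, hq2⟩ := Finset.mem_filter.1 hq
      have hq2' : ¬(q.1 = p.1 ∨ q.1 = p.2 ∨ q.2 = p.1 ∨ q.2 = p.2) := hq2
      push_neg at hq2'
      obtain ⟨h1, h2, h3, h4⟩ := hq2'
      have hWW : IndepFun (W p) (W q) P :=
        hindep.indepFun_mul_mul hg p.1 p.2 q.1 q.2 (Ne.symm h1) (Ne.symm h3)
          (Ne.symm h2) (Ne.symm h4)
      have hZZ : IndepFun (Z p) (Z q) P :=
        hWW.comp (measurable_id.sub_const (μp p)) (measurable_id.sub_const (μp q))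
      have hmul := hZZ.integral_mul_eq_mul_integral (intZ p).aestronglyMeasurable
        (intZ q).aestronglyMeasurable
      calc ∫ ω, Z p ω * Z q ω ∂P = (∫ ω, Z p ω ∂P) * ∫ ω, Z q ω ∂P := hmul
        _ = 0 := by rw [EZ p, zero_mul]
    have hmain : ∑ q ∈ Q.filter Pr, ∫ ω, Z p ω * Z q ω ∂P ≤ (4 * m) * (4 * C ^ 4) := by
      calc ∑ q ∈ Q.filter Pr, ∫ ω, Z p ω * Z q ω ∂P
          ≤ ∑ q ∈ Q.filter Pr, (4 * C ^ 4) := by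
            refine Finset.sum_le_sum fun q _ => ?_
            calc ∫ ω, Z p ω * Z q ω ∂P ≤ ∫ _, (4 * C ^ 4 : ℝ) ∂P :=
                  integral_mono (intZZ p q) (integrable_const _) (fun ω => bZZ p q ω)
              _ = 4 * C ^ 4 := by simp
        _ = ((Q.filter Pr).card : ℝ) * (4 * C ^ 4) := by rw [Finset.sum_const, nsmul_eq_mul]
        _ ≤ ((4 * m : ℕ) : ℝ) * (4 * C ^ 4) := by
            apply mul_le_mul_of_nonneg_right _ (by positivity)
            exact_mod_cast hshare p hp
        _ = (4 * m : ℝ) * (4 * C ^ 4) := by push_cast; ring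
    calc ∑ q ∈ Q, ∫ ω, Z p ω * Z q ω ∂P
        = ∑ q ∈ Q.filter Pr, ∫ ω, Z p ω * Z q ω ∂P
          + ∑ q ∈ Q.filter (fun q => ¬ Pr q), ∫ ω, Z p ω * Z q ω ∂P := hsplit.symm
      _ = ∑ q ∈ Q.filter Pr, ∫ ω, Z p ω * Z q ω ∂P := by rw [hzero, add_zero]
      _ ≤ (4 * m) * (4 * C ^ 4) := hmain
  calc ∑ p ∈ Q, ∫ ω, ∑ q ∈ Q, Z p ω * Z q ω ∂P
      = ∑ p ∈ Q, ∑ q ∈ Q, ∫ ω, Z p ω * Z q ω ∂P :=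
        Finset.sum_congr rfl fun p _ => integral_finset_sum _ fun q _ => intZZ p q
    _ ≤ ∑ p ∈ Q, ((4 * m) * (4 * C ^ 4)) := Finset.sum_le_sum inner
    _ = (Q.card : ℝ) * ((4 * m) * (4 * C ^ 4)) := by rw [Finset.sum_const, nsmul_eq_mul]


/-- For i.i.d. data, bounded `f`, and a partition of `{1,…,n}` into `S` blocks of
equal size `m = n/S`, the normalized variance of the block U-statistic
`∑_s ∑_{i≠l ∈ I_s} f(y_i) f(y_l)` is `O(S⁻¹) + O(n/S²)`, hence tends to `0`
whenever `S → ∞` and `S/√n → ∞`. -/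
theorem stmt_7
    {Ω : Type*} [MeasurableSpace Ω] (P : Measure Ω) [IsProbabilityMeasure P]
    (y : ℕ → Ω → ℝ) (hymeas : ∀ i, Measurable (y i))
    (hiid : iIndepFun y P)
    (hident : ∀ i j : ℕ, Measure.map (y i) P = Measure.map (y j) P)
    (f : ℝ → ℝ) (hfmeas : Measurable f) (Cf : ℝ) (hfbdd : ∀ x, |f x| ≤ Cf)
    (n S : ℕ → ℕ) (hn : ∀ k, 0 < n k) (hSpos : ∀ k, 0 < S k)
    (hdvd : ∀ k, S k ∣ n k)
    (I : (k : ℕ) → Fin (S k) → Finset ℕ)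
    (hdisj : ∀ k, ∀ s t : Fin (S k), s ≠ t → Disjoint (I k s) (I k t))
    (hcover : ∀ k, (Finset.univ : Finset (Fin (S k))).biUnion (I k)
        = Finset.range (n k))
    (hcard : ∀ k, ∀ s : Fin (S k), (I k s).card = n k / S k)
    (hS : Tendsto (fun k => (S k : ℝ)) atTop atTop)
    (hSn : Tendsto (fun k => (S k : ℝ) / Real.sqrt (n k)) atTop atTop) :
    (∃ C : ℝ, ∀ k : ℕ,
        (1 / (n k : ℝ) ^ 2) *
          variance (fun ω => ∑ s : Fin (S k), ∑ i ∈ I k s,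
            ∑ l ∈ (I k s).erase i, f (y i ω) * f (y l ω)) P
        ≤ C * (1 / (S k : ℝ) + (n k : ℝ) / (S k : ℝ) ^ 2)) ∧
    Tendsto (fun k : ℕ =>
        (1 / (n k : ℝ) ^ 2) *
          variance (fun ω => ∑ s : Fin (S k), ∑ i ∈ I k s,
            ∑ l ∈ (I k s).erase i, f (y i ω) * f (y l ω)) P)
      atTop (nhds 0) := by
  classical
  have hCf0 : 0 ≤ Cf := le_trans (abs_nonneg _) (hfbdd 0)
  have hgmeas : ∀ i, Measurable (fun ω => f (y i ω)) := fun i => hfmeas.comp (hymeas i)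
  have hgindep : iIndepFun
      (fun i ω => f (y i ω)) P := hiid.comp (fun _ => f) (fun _ => hfmeas)
  have key : ∀ k, (1 / (n k : ℝ) ^ 2) *
      variance (fun ω => ∑ s : Fin (S k), ∑ i ∈ I k s,
        ∑ l ∈ (I k s).erase i, f (y i ω) * f (y l ω)) P
      ≤ (16 * Cf ^ 4) * (1 / (S k : ℝ) + (n k : ℝ) / (S k : ℝ) ^ 2) := by
    intro k
    set m := n k / S k with hm
    have hnm : m * S k = n k := Nat.div_mul_cancel (hdvd k)
    set Q : Finset (ℕ × ℕ) := Finset.univ.biUnion (fun s : Fin (S k) => (I k s).offDiag)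
      with hQ
    have hQmem : ∀ p : ℕ × ℕ, p ∈ Q → ∃ s, p.1 ∈ I k s ∧ p.2 ∈ I k s ∧ p.1 ≠ p.2 := by
      intro p hp
      obtain ⟨s, -, hps⟩ := Finset.mem_biUnion.1 hp
      obtain ⟨h1, h2, h3⟩ := Finset.mem_offDiag.1 hps
      exact ⟨s, h1, h2, h3⟩
    have hpd : (↑(Finset.univ : Finset (Fin (S k))) : Set (Fin (S k))).PairwiseDisjoint
        (fun s => (I k s).offDiag) := by
      intro s _ t _ hst
      refine Finset.disjoint_left.2 fun p hps hpt => ?_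
      obtain ⟨h1, -, -⟩ := Finset.mem_offDiag.1 hps
      obtain ⟨h1', -, -⟩ := Finset.mem_offDiag.1 hpt
      exact (Finset.disjoint_left.1 (hdisj k s t hst) h1) h1'
    have hXeq : (fun ω => ∑ s : Fin (S k), ∑ i ∈ I k s,
        ∑ l ∈ (I k s).erase i, f (y i ω) * f (y l ω))
        = fun ω => ∑ p ∈ Q, f (y p.1 ω) * f (y p.2 ω) := by
      funext ω
      rw [hQ, Finset.sum_biUnion hpd]
      exact Finset.sum_congr rfl fun s _ =>
        my_sum_offDiag (I k s) (fun i l => f (y i ω) * f (y l ω))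
    have hblock : ∀ (a : ℕ) (s : Fin (S k)), a ∈ I k s → ∀ q ∈ Q,
        (q.1 = a ∨ q.2 = a) → q ∈ (I k s).offDiag := by
      intro a s ha q hq hqa
      obtain ⟨t, -, hqt⟩ := Finset.mem_biUnion.1 hq
      obtain ⟨h1, h2, h3⟩ := Finset.mem_offDiag.1 hqt
      have hts : t = s := by
        by_contra hne
        have hd := hdisj k t s hne
        rcases hqa with h | h
        · exact (Finset.disjoint_left.1 hd (h ▸ h1)) ha
        · exact (Finset.disjoint_left.1 hd (h ▸ h2)) ha
      subst hts
      exact Finset.mem_offDiag.2 ⟨h1, h2, h3⟩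
    have hcard1 : ∀ (a : ℕ) (s : Fin (S k)), a ∈ I k s →
        (Q.filter (fun q => q.1 = a)).card ≤ m := by
      intro a s ha
      have hsub : Q.filter (fun q => q.1 = a) ⊆ (I k s).offDiag.filter (fun q => q.1 = a) := by
        intro q hq
        obtain ⟨h1, h2⟩ := Finset.mem_filter.1 hq
        exact Finset.mem_filter.2 ⟨hblock a s ha q h1 (Or.inl h2), h2⟩
      have hinj : ((I k s).offDiag.filter (fun q => q.1 = a)).card ≤ (I k s).card := by
        apply Finset.card_le_card_of_injOn (fun q => q.2)
        · intro q hq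
          obtain ⟨h1, -⟩ := Finset.mem_filter.1 hq
          exact (Finset.mem_offDiag.1 h1).2.1
        · intro q hq q' hq' hqq
          obtain ⟨-, h2⟩ := Finset.mem_filter.1 (Finset.mem_coe.1 hq)
          obtain ⟨-, h2'⟩ := Finset.mem_filter.1 (Finset.mem_coe.1 hq')
          exact Prod.ext (h2.trans h2'.symm) hqq
      calc (Q.filter (fun q => q.1 = a)).card
          ≤ ((I k s).offDiag.filter (fun q => q.1 = a)).card := Finset.card_le_card hsub
        _ ≤ (I k s).card := hinj
        _ = m := hcard k s
    have hcard2 : ∀ (a : ℕ) (s : Fin (S k)), a ∈ I k s →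
        (Q.filter (fun q => q.2 = a)).card ≤ m := by
      intro a s ha
      have hsub : Q.filter (fun q => q.2 = a) ⊆ (I k s).offDiag.filter (fun q => q.2 = a) := by
        intro q hq
        obtain ⟨h1, h2⟩ := Finset.mem_filter.1 hq
        exact Finset.mem_filter.2 ⟨hblock a s ha q h1 (Or.inr h2), h2⟩
      have hinj : ((I k s).offDiag.filter (fun q => q.2 = a)).card ≤ (I k s).card := by
        apply Finset.card_le_card_of_injOn (fun q => q.1)
        · intro q hq
          obtain ⟨h1, -⟩ := Finset.mem_filter.1 hq
          exact (Finset.mem_offDiag.1 h1).1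
        · intro q hq q' hq' hqq
          obtain ⟨-, h2⟩ := Finset.mem_filter.1 (Finset.mem_coe.1 hq)
          obtain ⟨-, h2'⟩ := Finset.mem_filter.1 (Finset.mem_coe.1 hq')
          exact Prod.ext hqq (h2.trans h2'.symm)
      calc (Q.filter (fun q => q.2 = a)).card
          ≤ ((I k s).offDiag.filter (fun q => q.2 = a)).card := Finset.card_le_card hsub
        _ ≤ (I k s).card := hinj
        _ = m := hcard k s
    have hshare : ∀ p ∈ Q,
        (Q.filter (fun q => q.1 = p.1 ∨ q.1 = p.2 ∨ q.2 = p.1 ∨ q.2 = p.2)).card ≤ 4 * m := by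
      intro p hp
      obtain ⟨s, hp1, hp2, -⟩ := hQmem p hp
      have hsub : Q.filter (fun q => q.1 = p.1 ∨ q.1 = p.2 ∨ q.2 = p.1 ∨ q.2 = p.2)
          ⊆ ((Q.filter (fun q => q.1 = p.1) ∪ Q.filter (fun q => q.1 = p.2))
            ∪ (Q.filter (fun q => q.2 = p.1) ∪ Q.filter (fun q => q.2 = p.2))) := by
        intro q hq
        obtain ⟨h1, h2⟩ := Finset.mem_filter.1 hq
        simp only [Finset.mem_union, Finset.mem_filter]
        tauto
      have h1 := Finset.card_union_le (Q.filter (fun q => q.1 = p.1))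
        (Q.filter (fun q => q.1 = p.2))
      have h2 := Finset.card_union_le (Q.filter (fun q => q.2 = p.1))
        (Q.filter (fun q => q.2 = p.2))
      have h3 := Finset.card_union_le
        ((Q.filter (fun q => q.1 = p.1) ∪ Q.filter (fun q => q.1 = p.2)))
        ((Q.filter (fun q => q.2 = p.1) ∪ Q.filter (fun q => q.2 = p.2)))
      have h4 := Finset.card_le_card hsub
      have c1 := hcard1 p.1 s hp1
      have c2 := hcard1 p.2 s hp2
      have c3 := hcard2 p.1 s hp1
      have c4 := hcard2 p.2 s hp2
      omega
    have hQcard : (Q.card : ℝ) ≤ (S k : ℝ) * (m : ℝ) ^ 2 := by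
      have hb : Q.card ≤ S k * (m * m) := by
        calc Q.card ≤ ∑ s : Fin (S k), ((I k s).offDiag).card := Finset.card_biUnion_le
          _ ≤ ∑ _s : Fin (S k), m * m := by
              refine Finset.sum_le_sum fun s _ => ?_
              rw [Finset.offDiag_card, hcard k s]
              exact Nat.sub_le _ _
          _ = S k * (m * m) := by
              rw [Finset.sum_const, Finset.card_univ, Fintype.card_fin, smul_eq_mul]
      calc (Q.card : ℝ) ≤ ((S k * (m * m) : ℕ) : ℝ) := Nat.cast_le.2 hb
        _ = (S k : ℝ) * (m : ℝ) ^ 2 := by push_cast; ring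
    have hvar : variance (fun ω => ∑ p ∈ Q, f (y p.1 ω) * f (y p.2 ω)) P
        ≤ (Q.card : ℝ) * ((4 * m) * (4 * Cf ^ 4)) :=
      my_var_bound P (fun i ω => f (y i ω)) hgmeas hgindep Cf hCf0
        (fun i ω => hfbdd _) Q m hshare
    rw [hXeq]
    have hnR : (0:ℝ) < n k := by exact_mod_cast hn k
    have hSR : (0:ℝ) < S k := by exact_mod_cast hSpos k
    have hmn : (m : ℝ) * (S k : ℝ) = (n k : ℝ) := by exact_mod_cast hnm
    have hmR : (0:ℝ) < m := by
      have hnk := hn k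
      rcases Nat.eq_zero_or_pos m with h | h
      · exfalso; rw [h] at hnm; simp at hnm; omega
      · exact_mod_cast h
    calc (1 / (n k : ℝ) ^ 2) * variance (fun ω => ∑ p ∈ Q, f (y p.1 ω) * f (y p.2 ω)) P
        ≤ (1 / (n k : ℝ) ^ 2) * (((S k : ℝ) * (m : ℝ) ^ 2) * ((4 * m) * (4 * Cf ^ 4))) := by
          apply mul_le_mul_of_nonneg_left _ (by positivity)
          exact le_trans hvar (mul_le_mul_of_nonneg_right hQcard (by positivity))
      _ = (16 * Cf ^ 4) * ((n k : ℝ) / (S k : ℝ) ^ 2) := by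
          rw [← hmn]
          field_simp
          ring
      _ ≤ (16 * Cf ^ 4) * (1 / (S k : ℝ) + (n k : ℝ) / (S k : ℝ) ^ 2) := by
          apply mul_le_mul_of_nonneg_left _ (by positivity)
          have h0 : 0 ≤ 1 / (S k : ℝ) := by positivity
          linarith
  refine ⟨⟨16 * Cf ^ 4, key⟩, ?_⟩
  have hnonneg : ∀ k, 0 ≤ (1 / (n k : ℝ) ^ 2) *
      variance (fun ω => ∑ s : Fin (S k), ∑ i ∈ I k s,
        ∑ l ∈ (I k s).erase i, f (y i ω) * f (y l ω)) P :=
    fun k => mul_nonneg (by positivity) (variance_nonneg _ _)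
  have hb : Tendsto (fun k => (16 * Cf ^ 4) * (1 / (S k : ℝ) + (n k : ℝ) / (S k : ℝ) ^ 2))
      atTop (nhds 0) := by
    have h1 : Tendsto (fun k => 1 / (S k : ℝ)) atTop (nhds 0) := by
      simpa [one_div, Pi.inv_def] using hS.inv_tendsto_atTop
    have h3 : Tendsto (fun k => Real.sqrt (n k) / (S k : ℝ)) atTop (nhds 0) := by
      have := hSn.inv_tendsto_atTop
      simpa [Pi.inv_def, inv_div] using this
    have h2 : Tendsto (fun k => (n k : ℝ) / (S k : ℝ) ^ 2) atTop (nhds 0) := by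
      have h4 : (fun k => (n k : ℝ) / (S k : ℝ) ^ 2)
          = fun k => (Real.sqrt (n k) / (S k : ℝ)) * (Real.sqrt (n k) / (S k : ℝ)) := by
        funext k
        rw [div_mul_div_comm, Real.mul_self_sqrt (Nat.cast_nonneg _), sq]
      rw [h4]
      simpa using h3.mul h3
    have := (h1.add h2).const_mul (16 * Cf ^ 4)
    simpa using this
  exact squeeze_zero hnonneg key hb
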